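/- arXiv:2408.06877 — 2 statements merged into one kernel-verified Lean document; each statement's English description precedes it below -/
import Mathlib

section
/- Let ρ̄ be analytic with ρ̄(0) = ρ₀ > 0, w analytic with w(0) = ω₀. Suppose x₁(t,x) = a₁ - √(a₁² - a₀) and x₂(t,x) = a₁ + √(a₁² - a₀) with a₀, a₁ analytic vanishing at (t₀,0). Then there exist analytic functions M(t,x), G(t,x) near (t₀,0), with M(t₀,0) = 2ρ̄(0) and G(t₀,0) = 2ρ̄(0)w(0), such that ∫_{x₁}^{x₂} ρ̄(ξ)dξ = M(t,x)·√(a₁² - a₀) and ∫_{x₁}^{x₂} ρ̄(ξ)w(ξ)dξ = G(t,x)·√(a₁² - a₀). -/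
open Topology intervalIntegral MeasureTheory
open scoped ENNReal NNReal

private lemma choose_le_two_pow' (n k : ℕ) : n.choose k ≤ 2 ^ n := by
  rcases le_or_gt k n with h | h
  · calc n.choose k ≤ ∑ m ∈ Finset.range (n+1), n.choose m :=
        Finset.single_le_sum (fun i _ => Nat.zero_le _) (Finset.mem_range.2 (Nat.lt_succ_of_le h))
    _ = 2 ^ n := Nat.sum_range_choose n
  · simp [Nat.choose_eq_zero_of_lt h]

private lemma prod_ite_pow (m k : ℕ) (hk : k ≤ m) (c v : ℝ) :
    (∏ i : Fin m, if (i : ℕ) < k then c else v) = c ^ k * v ^ (m - k) := by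
  rw [Fin.prod_univ_eq_prod_range (fun i => if i < k then c else v) m, Finset.prod_ite]
  have h1 : (Finset.range m).filter (fun i => i < k) = Finset.range k := by
    ext i; simp only [Finset.mem_filter, Finset.mem_range]; omega
  have h2 : (Finset.range m).filter (fun i => ¬ i < k) = Finset.Ico k m := by
    ext i; simp only [Finset.mem_filter, Finset.mem_range, Finset.mem_Ico]; omega
  rw [h1, h2, Finset.prod_const, Finset.prod_const, Finset.card_range, Nat.card_Ico]

set_option maxHeartbeats 2000000 in
private theorem aux_sqrt_integral (f : ℝ → ℝ) (hf : AnalyticAt ℝ f 0) :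
    ∃ H : ℝ → ℝ → ℝ,
      AnalyticAt ℝ (fun q : ℝ × ℝ => H q.1 q.2) ((0 : ℝ), (0 : ℝ)) ∧
      H 0 0 = 2 * f 0 ∧
      ∀ᶠ q : ℝ × ℝ in 𝓝 (0, 0), 0 ≤ q.2 →
        (∫ ξ in (q.1 - Real.sqrt q.2)..(q.1 + Real.sqrt q.2), f ξ)
          = H q.1 q.2 * Real.sqrt q.2 := by
  obtain ⟨p, r, hpr⟩ := hf
  obtain ⟨ρ, hρ0', hρr⟩ := ENNReal.lt_iff_exists_nnreal_btwn.1 hpr.r_pos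
  have hρ0 : (0 : ℝ) < ρ := by exact_mod_cast hρ0'
  obtain ⟨C, hC0, hC⟩ := p.norm_mul_pow_le_of_lt_radius (lt_of_lt_of_le hρr hpr.r_le)
  set a : ℕ → ℝ := fun n => p.coeff n with ha_def
  have ha : ∀ n, |a n| ≤ C / (ρ : ℝ) ^ n := by
    intro n
    have h1 : |a n| ≤ ‖p n‖ := by
      have h := (p n).le_opNorm (1 : Fin n → ℝ)
      simp only [Pi.one_apply, norm_one, Finset.prod_const, one_pow, mul_one,
        Real.norm_eq_abs] at h
      exact h
    rw [le_div_iff₀ (by positivity)]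
    exact le_trans (by nlinarith [norm_nonneg (p n), pow_pos hρ0 n]) (hC n)
  have hsum_f : ∀ y : ℝ, |y| < (ρ : ℝ) → HasSum (fun n => a n * y ^ n) (f y) := by
    intro y hy
    have hmem : y ∈ Metric.eball (0 : ℝ) r := by
      rw [mem_emetric_ball_zero_iff]
      have h2 : ‖y‖₊ < ρ := by
        rw [← NNReal.coe_lt_coe, coe_nnnorm, Real.norm_eq_abs]; exact hy
      exact lt_trans (by exact_mod_cast h2) hρr
    have h3 := hpr.hasSum hmem
    have h4 : (fun n => a n * y ^ n) = fun n => p n (fun _ => y) := by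
      funext n
      rw [FormalMultilinearSeries.apply_eq_pow_smul_coeff, smul_eq_mul, mul_comm]
    rw [h4]
    simpa using h3
  set δ : ℝ := (ρ : ℝ) / 8 with hδ_def
  have hδ0 : 0 < δ := by positivity
  set lam : ℕ → ℕ → ℝ := fun α β =>
    2 * a (α + 2*β) * (Nat.choose (α + 2*β + 1) (2*β + 1) : ℝ) / (α + 2*β + 1 : ℕ) with hlam_def
  have hlam_bound : ∀ α β, |lam α β| ≤ 4*C * (2/(ρ:ℝ))^α * (4/(ρ:ℝ)^2)^β := by
    intro α β
    set n := α + 2*β with hn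
    have hch : ((n+1).choose (2*β+1) : ℝ) ≤ 2 ^ (n+1) := by
      exact_mod_cast choose_le_two_pow' (n+1) (2*β+1)
    have hd : (1:ℝ) ≤ ((n+1 : ℕ) : ℝ) := by exact_mod_cast Nat.one_le_iff_ne_zero.2 (Nat.succ_ne_zero n)
    have h1 : |lam α β| = 2 * |a n| * ((n+1).choose (2*β+1) : ℝ) / ((n+1 : ℕ) : ℝ) := by
      rw [hlam_def]
      rw [abs_div, abs_mul, abs_mul, abs_two, Nat.abs_cast, Nat.abs_cast]
    have h2 : |lam α β| ≤ 2 * |a n| * 2^(n+1) := by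
      rw [h1]
      calc 2 * |a n| * ((n+1).choose (2*β+1) : ℝ) / ((n+1 : ℕ) : ℝ)
          ≤ 2 * |a n| * ((n+1).choose (2*β+1) : ℝ) / 1 := by
            gcongr
        _ = 2 * |a n| * ((n+1).choose (2*β+1) : ℝ) := div_one _
        _ ≤ 2 * |a n| * 2^(n+1) := by
            gcongr
    have h3 : |lam α β| ≤ 2 * (C / (ρ:ℝ)^n) * 2^(n+1) := by
      refine le_trans h2 ?_
      gcongr
      exact ha n
    refine le_trans h3 (le_of_eq ?_)
    have e1 : (ρ:ℝ)^n = (ρ:ℝ)^α * ((ρ:ℝ)^2)^β := by rw [hn, pow_add, pow_mul]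
    have e2 : (2:ℝ)^(n+1) = 2 * (2^α * 4^β) := by
      rw [hn, pow_succ, pow_add, pow_mul]
      norm_num
      ring
    rw [e1, e2]
    have hρne : (ρ:ℝ) ≠ 0 := ne_of_gt hρ0
    field_simp
    rw [div_pow, div_pow]; field_simp; ring
  have hsummable : ∀ c v : ℝ, |c| < δ → |v| < δ*δ →
      Summable (fun q : ℕ × ℕ => lam q.1 q.2 * c ^ q.1 * v ^ q.2) := by
    intro c v hc hv
    have hx1 : (0:ℝ) ≤ 2*|c|/(ρ:ℝ) := by positivity
    have hx2 : 2*|c|/(ρ:ℝ) < 1 := by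
      rw [div_lt_one hρ0]; rw [hδ_def] at hc; linarith [abs_nonneg c]
    have hy1 : (0:ℝ) ≤ 4*|v|/(ρ:ℝ)^2 := by positivity
    have hy2 : 4*|v|/(ρ:ℝ)^2 < 1 := by
      rw [div_lt_one (by positivity)]
      rw [hδ_def] at hv
      nlinarith [abs_nonneg v, hρ0]
    have hs1 : Summable (fun α : ℕ => (4*C) * (2*|c|/(ρ:ℝ))^α) :=
      (summable_geometric_of_lt_one hx1 hx2).mul_left _
    have hs2 : Summable (fun β : ℕ => (4*|v|/(ρ:ℝ)^2)^β) :=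
      summable_geometric_of_lt_one hy1 hy2
    have hs : Summable (fun q : ℕ × ℕ => ((4*C) * (2*|c|/(ρ:ℝ))^q.1) * (4*|v|/(ρ:ℝ)^2)^q.2) :=
      hs1.mul_of_nonneg hs2 (fun α => by positivity) (fun β => by positivity)
    apply Summable.of_norm
    refine hs.of_nonneg_of_le (fun q => norm_nonneg _) (fun q => ?_)
    rw [Real.norm_eq_abs, abs_mul, abs_mul, abs_pow, abs_pow]
    calc |lam q.1 q.2| * |c|^q.1 * |v|^q.2
        ≤ (4*C * (2/(ρ:ℝ))^q.1 * (4/(ρ:ℝ)^2)^q.2) * |c|^q.1 * |v|^q.2 := by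
          gcongr
          exact hlam_bound q.1 q.2
      _ = ((4*C) * (2*|c|/(ρ:ℝ))^q.1) * (4*|v|/(ρ:ℝ)^2)^q.2 := by
          have e1 : (2*|c|/(ρ:ℝ)) = (2/(ρ:ℝ)) * |c| := by ring
          have e2 : (4*|v|/(ρ:ℝ)^2) = (4/(ρ:ℝ)^2) * |v| := by ring
          rw [e1, e2, mul_pow, mul_pow]
          ring
  set H : ℝ → ℝ → ℝ := fun c v => ∑' q : ℕ × ℕ, lam q.1 q.2 * c ^ q.1 * v ^ q.2 with hH_def
  have hH00 : H 0 0 = 2 * f 0 := by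
    have h0 : ∀ q : ℕ × ℕ, q ≠ (0,0) → lam q.1 q.2 * (0:ℝ) ^ q.1 * (0:ℝ) ^ q.2 = 0 := by
      rintro ⟨α, β⟩ hq
      rcases Nat.eq_zero_or_pos α with hα | hα
      · rcases Nat.eq_zero_or_pos β with hβ | hβ
        · exact absurd (by simp [hα, hβ, Prod.ext_iff]) hq
        · simp [zero_pow (Nat.pos_iff_ne_zero.mp hβ)]
      · simp [zero_pow (Nat.pos_iff_ne_zero.mp hα)]
    have ha0 : a 0 = f 0 := hpr.coeff_zero 1
    have h1 : H 0 0 = lam 0 0 * (0:ℝ)^(0:ℕ) * (0:ℝ)^(0:ℕ) :=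
      tsum_eq_single ((0,0) : ℕ × ℕ) h0
    rw [h1]
    simp [hlam_def, ha0]
  set τr : ℝ := min δ (δ*δ) with hτr_def
  have hτr0 : 0 < τr := lt_min hδ0 (by positivity)
  set τ : NNReal := τr.toNNReal with hτ_def
  have hτcoe : (τ : ℝ) = τr := Real.coe_toNNReal τr hτr0.le
  set mono : (m : ℕ) → ℕ → ContinuousMultilinearMap ℝ (fun _ : Fin m => ℝ × ℝ) ℝ := fun m β =>
    (ContinuousMultilinearMap.mkPiAlgebra ℝ (Fin m) ℝ).compContinuousLinearMap
      (fun i => if (i : ℕ) < m - β then ContinuousLinearMap.fst ℝ ℝ ℝ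
        else ContinuousLinearMap.snd ℝ ℝ ℝ) with hmono_def
  have hmono_apply : ∀ (m β : ℕ), β ≤ m → ∀ c v : ℝ,
      mono m β (fun _ => (c, v)) = c ^ (m - β) * v ^ β := by
    intro m β hβ c v
    have h1 : mono m β (fun _ => (c, v))
        = ∏ i : Fin m, (if (i : ℕ) < m - β then c else v) := by
      rw [hmono_def]
      rw [ContinuousMultilinearMap.compContinuousLinearMap_apply,
        ContinuousMultilinearMap.mkPiAlgebra_apply]
      apply Finset.prod_congr rfl
      intro i _
      by_cases h : (i : ℕ) < m - β <;> simp [h]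
    rw [h1, prod_ite_pow m (m - β) (Nat.sub_le m β) c v, Nat.sub_sub_self hβ]
  have hmono_norm : ∀ (m β : ℕ), ‖mono m β‖ ≤ 1 := by
    intro m β
    rw [hmono_def]
    refine le_trans (ContinuousMultilinearMap.norm_compContinuousLinearMap_le _ _) ?_
    rw [ContinuousMultilinearMap.norm_mkPiAlgebra, one_mul]
    refine Finset.prod_le_one (fun i _ => norm_nonneg _) (fun i _ => ?_)
    by_cases h : (i : ℕ) < m - β
    · simp only [h, if_true]
      refine ContinuousLinearMap.opNorm_le_bound _ zero_le_one (fun x => ?_)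
      rw [one_mul]; exact norm_fst_le x
    · simp only [h, if_false]
      refine ContinuousLinearMap.opNorm_le_bound _ zero_le_one (fun x => ?_)
      rw [one_mul]; exact norm_snd_le x
  set Q : FormalMultilinearSeries ℝ (ℝ × ℝ) ℝ := fun m =>
    ∑ q ∈ Finset.HasAntidiagonal.antidiagonal m, lam q.1 q.2 • mono m q.2 with hQ_def
  have hQ_apply : ∀ (m : ℕ) (c v : ℝ), Q m (fun _ => (c,v))
      = ∑ q ∈ Finset.HasAntidiagonal.antidiagonal m, lam q.1 q.2 * c ^ q.1 * v ^ q.2 := by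
    intro m c v
    rw [hQ_def]
    rw [ContinuousMultilinearMap.sum_apply]
    apply Finset.sum_congr rfl
    intro q hq
    have hqm := Finset.HasAntidiagonal.mem_antidiagonal.1 hq
    rw [ContinuousMultilinearMap.smul_apply, hmono_apply m q.2 (by omega) c v, smul_eq_mul]
    have h2 : m - q.2 = q.1 := by omega
    rw [h2]; ring
  have hQ_norm : ∀ m : ℕ, ‖Q m‖ * (τ:ℝ)^m ≤ 4*C := by
    intro m
    have hτδ : (τ:ℝ) ≤ δ := by rw [hτcoe, hτr_def]; exact min_le_left _ _
    have hτδδ : (τ:ℝ) ≤ δ*δ := by rw [hτcoe, hτr_def]; exact min_le_right _ _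
    have hτ0 : (0:ℝ) ≤ (τ:ℝ) := τ.2
    have hb1 : (2/(ρ:ℝ)) * (τ:ℝ) ≤ 1/2 := by
      rw [div_mul_eq_mul_div, div_le_iff₀ hρ0]
      rw [hδ_def] at hτδ
      linarith
    have hb2 : (4/(ρ:ℝ)^2) * (τ:ℝ) ≤ 1/2 := by
      rw [div_mul_eq_mul_div, div_le_iff₀ (by positivity)]
      rw [hδ_def] at hτδδ
      nlinarith [hρ0]
    have h1 : ‖Q m‖ ≤ ∑ q ∈ Finset.HasAntidiagonal.antidiagonal m, |lam q.1 q.2| := by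
      rw [hQ_def]
      beta_reduce
      refine le_trans (norm_sum_le _ _) ?_
      refine Finset.sum_le_sum (fun q _ => ?_)
      have e9 : ‖lam q.1 q.2 • mono m q.2‖ = |lam q.1 q.2| * ‖mono m q.2‖ := by
        rw [norm_smul (lam q.1 q.2) (mono m q.2), Real.norm_eq_abs]
      rw [e9]
      calc |lam q.1 q.2| * ‖mono m q.2‖ ≤ |lam q.1 q.2| * 1 := by
            gcongr
            exact hmono_norm m q.2
        _ = |lam q.1 q.2| := mul_one _
    have hterm : ∀ q ∈ Finset.HasAntidiagonal.antidiagonal m, |lam q.1 q.2| * (τ:ℝ)^m ≤ 4*C * (1/2)^m := by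
      intro q hq
      have hqm := Finset.HasAntidiagonal.mem_antidiagonal.1 hq
      calc |lam q.1 q.2| * (τ:ℝ)^m
          ≤ (4*C * (2/(ρ:ℝ))^q.1 * (4/(ρ:ℝ)^2)^q.2) * (τ:ℝ)^m := by
            gcongr
            exact hlam_bound _ _
        _ = 4*C * ((2/(ρ:ℝ))*(τ:ℝ))^q.1 * ((4/(ρ:ℝ)^2)*(τ:ℝ))^q.2 := by
            rw [← hqm, pow_add, mul_pow, mul_pow]; ring
        _ ≤ 4*C * (1/2)^q.1 * (1/2)^q.2 := by
            gcongr <;> positivity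
        _ = 4*C * (1/2)^m := by rw [← hqm, pow_add]; ring
    calc ‖Q m‖ * (τ:ℝ)^m ≤ (∑ q ∈ Finset.HasAntidiagonal.antidiagonal m, |lam q.1 q.2|) * (τ:ℝ)^m :=
          mul_le_mul_of_nonneg_right h1 (by positivity)
      _ = ∑ q ∈ Finset.HasAntidiagonal.antidiagonal m, |lam q.1 q.2| * (τ:ℝ)^m := Finset.sum_mul _ _ _
      _ ≤ ∑ _q ∈ Finset.HasAntidiagonal.antidiagonal m, 4*C * (1/2)^m := Finset.sum_le_sum hterm
      _ = ((m+1 : ℕ) : ℝ) * (4*C*(1/2)^m) := by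
          rw [Finset.sum_const, Finset.Nat.card_antidiagonal, nsmul_eq_mul]
      _ ≤ (2:ℝ)^m * (4*C*(1/2)^m) := by
          have h2 : ((m+1 : ℕ) : ℝ) ≤ (2:ℝ)^m := by
            exact_mod_cast Nat.succ_le_of_lt (Nat.lt_two_pow_self (n := m))
          have h3 : (0:ℝ) ≤ 4*C*(1/2)^m := by positivity
          exact mul_le_mul_of_nonneg_right h2 h3
      _ = ((2:ℝ)^m * (1/2)^m) * (4*C) := by ring
      _ = 4*C := by rw [← mul_pow]; norm_num
  have hτpos : (0:ℝ≥0∞) < (τ : ℝ≥0∞) := by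
    exact_mod_cast Real.toNNReal_pos.2 hτr0
  have hball : HasFPowerSeriesOnBall (fun q : ℝ × ℝ => H q.1 q.2) Q ((0:ℝ),(0:ℝ)) τ := by
    refine ⟨Q.le_radius_of_bound (4*C) hQ_norm, hτpos, ?_⟩
    intro y hy
    rw [mem_emetric_ball_zero_iff] at hy
    have hynorm : ‖y‖ < τr := by
      have h := ENNReal.coe_lt_coe.1 hy
      rw [← hτcoe, ← coe_nnnorm]
      exact_mod_cast h
    have hc : |y.1| < δ := by
      refine lt_of_le_of_lt ?_ (lt_of_lt_of_le hynorm (by rw [hτr_def]; exact min_le_left _ _))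
      rw [← Real.norm_eq_abs]; exact norm_fst_le y
    have hv : |y.2| < δ*δ := by
      refine lt_of_le_of_lt ?_ (lt_of_lt_of_le hynorm (by rw [hτr_def]; exact min_le_right _ _))
      rw [← Real.norm_eq_abs]; exact norm_snd_le y
    set F : ℕ × ℕ → ℝ := fun q => lam q.1 q.2 * y.1 ^ q.1 * y.2 ^ q.2 with hF_def
    have hsum : HasSum F (H y.1 y.2) := (hsummable y.1 y.2 hc hv).hasSum
    have h5 : HasSum (F ∘ (Finset.HasAntidiagonal.sigmaAntidiagonalEquivProd (A := ℕ))) (H y.1 y.2) :=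
      (Finset.HasAntidiagonal.sigmaAntidiagonalEquivProd (A := ℕ)).hasSum_iff.2 hsum
    have hfiber : ∀ m : ℕ, HasSum (fun q : (Finset.HasAntidiagonal.antidiagonal m : Finset (ℕ×ℕ)) =>
        F (q : ℕ×ℕ)) (Q m (fun _ => y)) := by
      intro m
      have h7 := hasSum_fintype (fun q : (Finset.HasAntidiagonal.antidiagonal m : Finset (ℕ×ℕ)) => F (q : ℕ×ℕ))
      have h8 : ∑ q : (Finset.HasAntidiagonal.antidiagonal m : Finset (ℕ×ℕ)), F (q : ℕ×ℕ)
          = Q m (fun _ => y) := by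
        rw [Finset.sum_coe_sort (Finset.HasAntidiagonal.antidiagonal m) F]
        rw [show (fun _ : Fin m => y) = (fun _ : Fin m => (y.1, y.2)) by simp]
        exact (hQ_apply m y.1 y.2).symm
      rwa [h8] at h7
    have h6 : HasSum (fun m => Q m (fun _ => y)) (H y.1 y.2) := HasSum.sigma h5 hfiber
    have h9 : ((0:ℝ),(0:ℝ)) + y = y := by simp
    rw [h9]
    exact h6
  have hanalytic : AnalyticAt ℝ (fun q : ℝ × ℝ => H q.1 q.2) ((0:ℝ),(0:ℝ)) :=
    hball.analyticAt
  have hmain : ∀ c v : ℝ, |c| < δ → |v| < δ*δ → 0 ≤ v →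
      (∫ ξ in (c - Real.sqrt v)..(c + Real.sqrt v), f ξ) = H c v * Real.sqrt v := by
    intro c v hc hv hv0
    set s : ℝ := Real.sqrt v with hs_def
    have hs0 : 0 ≤ s := Real.sqrt_nonneg v
    have hsδ : s < δ := by
      rw [hs_def]
      refine (Real.sqrt_lt' hδ0).2 ?_
      rw [show δ^2 = δ*δ by ring]
      exact lt_of_le_of_lt (le_abs_self v) hv
    have hs2 : s^2 = v := Real.sq_sqrt hv0
    have hle : c - s ≤ c + s := by linarith
    have hξρ4 : ∀ ξ ∈ Set.Ioc (c - s) (c + s), |ξ| ≤ (ρ:ℝ)/4 := by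
      intro ξ hξ
      rw [abs_le]
      have h1 := neg_abs_le c
      have h2 := le_abs_self c
      have h3 := hξ.1
      have h4 := hξ.2
      rw [hδ_def] at hc hsδ
      constructor <;> nlinarith [abs_nonneg c]
    have hξρ : ∀ ξ ∈ Set.Ioc (c - s) (c + s), |ξ| < (ρ:ℝ) := by
      intro ξ hξ
      refine lt_of_le_of_lt (hξρ4 ξ hξ) ?_
      linarith [hρ0]
    have hint : (∫ ξ in (c - s)..(c + s), f ξ)
        = ∑' n : ℕ, a n * (((c+s)^(n+1) - (c-s)^(n+1))/((n:ℝ)+1)) := by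
      rw [intervalIntegral.integral_of_le hle]
      rw [setIntegral_congr_fun measurableSet_Ioc
        (fun ξ hξ => ((hsum_f ξ (hξρ ξ hξ)).tsum_eq).symm : Set.EqOn f (fun ξ => ∑' n : ℕ, a n * ξ^n) _)]
      have hmeas : ∀ n : ℕ, AEStronglyMeasurable (fun ξ : ℝ => a n * ξ^n)
          (volume.restrict (Set.Ioc (c-s) (c+s))) := fun n =>
        ((measurable_id.pow_const n).const_mul (a n)).aestronglyMeasurable
      have hb : ∀ n : ℕ, (∫⁻ ξ in Set.Ioc (c-s) (c+s), ‖a n * ξ^n‖₊)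
          ≤ ((‖a n‖₊ * (ρ/4)^n : ℝ≥0) : ℝ≥0∞) * ENNReal.ofReal (2*s) := by
        intro n
        have hstep : (∫⁻ ξ in Set.Ioc (c-s) (c+s), ‖a n * ξ^n‖₊)
            ≤ ∫⁻ _ξ in Set.Ioc (c-s) (c+s), ((‖a n‖₊ * (ρ/4)^n : ℝ≥0) : ℝ≥0∞) := by
          refine setLIntegral_mono measurable_const (fun ξ hξ => ?_)
          have h5 : ‖ξ‖₊ ≤ ρ/4 := by
            have h5' : ‖ξ‖ ≤ ((ρ/4 : ℝ≥0) : ℝ) := by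
              rw [Real.norm_eq_abs]
              refine le_trans (hξρ4 ξ hξ) (le_of_eq ?_)
              push_cast
              ring
            exact_mod_cast h5'
          rw [ENNReal.coe_le_coe, nnnorm_mul, nnnorm_pow]
          exact mul_le_mul_right (pow_le_pow_left' h5 n) _
        refine le_trans hstep ?_
        rw [setLIntegral_const, Real.volume_Ioc]
        refine mul_le_mul_right (ENNReal.ofReal_le_ofReal (by linarith)) _
      have hfin : (∑' n : ℕ, ∫⁻ ξ in Set.Ioc (c-s) (c+s), ‖a n * ξ^n‖₊) ≠ ⊤ := by
        refine ne_top_of_le_ne_top ?_ (ENNReal.tsum_le_tsum hb)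
        rw [ENNReal.tsum_mul_right]
        refine ENNReal.mul_ne_top ?_ ENNReal.ofReal_ne_top
        rw [ENNReal.tsum_coe_ne_top_iff_summable]
        rw [← NNReal.summable_coe]
        have hcomp : ∀ n : ℕ, ((‖a n‖₊ * (ρ/4)^n : ℝ≥0) : ℝ) ≤ C * (1/4)^n := by
          intro n
          push_cast
          rw [Real.norm_eq_abs]
          have h6 := ha n
          have h7 : |a n| * ((ρ:ℝ)/4)^n ≤ (C/(ρ:ℝ)^n) * ((ρ:ℝ)/4)^n := by
            gcongr
          refine le_trans h7 (le_of_eq ?_)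
          have hρne : (ρ:ℝ) ≠ 0 := ne_of_gt hρ0
          field_simp
          ring
        refine Summable.of_nonneg_of_le (fun n => by positivity) hcomp ?_
        exact (summable_geometric_of_lt_one (by norm_num) (by norm_num)).mul_left C
      rw [MeasureTheory.integral_tsum hmeas hfin]
      refine tsum_congr (fun n => ?_)
      rw [← intervalIntegral.integral_of_le hle, intervalIntegral.integral_const_mul,
        integral_pow]
    set g : ℕ × ℕ → ℝ := fun q =>
      a (q.1 + q.2 - 1) / ((q.1 + q.2 : ℕ) : ℝ) * (((q.1 + q.2).choose q.2 : ℕ) : ℝ) * c ^ q.1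
        * (s ^ q.2 - (-s) ^ q.2) with hg_def
    have hg_bound : ∀ q : ℕ × ℕ, |g q|
        ≤ (2*C*(ρ:ℝ)) * (2*|c|/(ρ:ℝ))^q.1 * (2*s/(ρ:ℝ))^q.2 := by
      rintro ⟨α, j⟩
      rcases Nat.eq_zero_or_pos (α + j) with hm | hm
      · have hα : α = 0 := by omega
        have hj : j = 0 := by omega
        subst hα; subst hj
        rw [hg_def]
        simp only [pow_zero, sub_self, mul_zero, abs_zero]
        positivity
      · have hm1 : (1:ℝ) ≤ ((α + j : ℕ) : ℝ) := by exact_mod_cast hm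
        have habs : |g (α, j)|
            = |a (α+j-1)| / ((α+j : ℕ) : ℝ) * (((α+j).choose j : ℕ) : ℝ) * |c|^α
              * |s^j - (-s)^j| := by
          rw [hg_def]
          rw [abs_mul, abs_mul, abs_mul, abs_div, abs_pow, Nat.abs_cast, Nat.abs_cast]
        have hsj : |s ^ j - (-s)^j| ≤ 2 * s^j := by
          rcases Nat.even_or_odd j with he | ho
          · rw [he.neg_pow, sub_self, abs_zero]
            positivity
          · rw [ho.neg_pow, sub_neg_eq_add, abs_of_nonneg (by positivity)]
            linarith [pow_nonneg hs0 j]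
        have hch : (((α+j).choose j : ℕ) : ℝ) ≤ 2^(α+j) := by
          exact_mod_cast choose_le_two_pow' (α+j) j
        have h8 : |g (α, j)| ≤ |a (α+j-1)| * 2^(α+j) * |c|^α * (2 * s^j) := by
          rw [habs]
          have h9 : |a (α+j-1)| / ((α+j : ℕ) : ℝ) ≤ |a (α+j-1)| := by
            rw [div_le_iff₀ (by linarith)]
            nlinarith [abs_nonneg (a (α+j-1))]
          gcongr <;> first
            | exact h9
            | exact hch
            | exact hsj
            | positivity
        refine le_trans h8 ?_
        have h10 : |a (α+j-1)| ≤ C * (ρ:ℝ) / (ρ:ℝ)^(α+j) := by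
          refine le_trans (ha (α+j-1)) (le_of_eq ?_)
          have e5 : (α+j-1) + 1 = α + j := by omega
          rw [← e5, pow_succ]
          field_simp
          rw [Nat.add_sub_cancel]
        have h11 : |a (α+j-1)| * 2^(α+j) * |c|^α * (2 * s^j)
            ≤ (C * (ρ:ℝ) / (ρ:ℝ)^(α+j)) * 2^(α+j) * |c|^α * (2 * s^j) := by
          gcongr
        refine le_trans h11 (le_of_eq ?_)
        have hρne : (ρ:ℝ) ≠ 0 := ne_of_gt hρ0
        rw [pow_add]
        field_simp
        rw [div_pow, div_pow]; field_simp; ring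
    have hg_sum : Summable g := by
      have hx2 : 2*|c|/(ρ:ℝ) < 1 := by
        rw [div_lt_one hρ0]; rw [hδ_def] at hc; linarith [abs_nonneg c]
      have hy2 : 2*s/(ρ:ℝ) < 1 := by
        rw [div_lt_one hρ0]; rw [hδ_def] at hsδ; linarith
      have hs1 : Summable (fun α : ℕ => (2*C*(ρ:ℝ)) * (2*|c|/(ρ:ℝ))^α) :=
        (summable_geometric_of_lt_one (by positivity) hx2).mul_left _
      have hs2' : Summable (fun β : ℕ => (2*s/(ρ:ℝ))^β) :=
        summable_geometric_of_lt_one (by positivity) hy2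
      have hs3 : Summable (fun q : ℕ × ℕ =>
          ((2*C*(ρ:ℝ)) * (2*|c|/(ρ:ℝ))^q.1) * (2*s/(ρ:ℝ))^q.2) :=
        hs1.mul_of_nonneg hs2' (fun α => by positivity) (fun β => by positivity)
      apply Summable.of_norm
      refine hs3.of_nonneg_of_le (fun q => norm_nonneg _) (fun q => ?_)
      rw [Real.norm_eq_abs]
      refine le_trans (hg_bound q) (le_of_eq ?_)
      ring
    set S : ℝ := ∑' q : ℕ × ℕ, g q with hS_def
    have hgS : HasSum g S := hg_sum.hasSum
    have h5g : HasSum (g ∘ (Finset.HasAntidiagonal.sigmaAntidiagonalEquivProd (A := ℕ))) S :=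
      (Finset.HasAntidiagonal.sigmaAntidiagonalEquivProd (A := ℕ)).hasSum_iff.2 hgS
    set t : ℕ → ℝ := fun m => ∑ q ∈ Finset.HasAntidiagonal.antidiagonal m, g q with ht_def
    have hfiberg : ∀ m : ℕ, HasSum (fun q : (Finset.HasAntidiagonal.antidiagonal m : Finset (ℕ×ℕ)) =>
        g (q : ℕ×ℕ)) (t m) := by
      intro m
      have h7 := hasSum_fintype (fun q : (Finset.HasAntidiagonal.antidiagonal m : Finset (ℕ×ℕ)) => g (q : ℕ×ℕ))
      rwa [Finset.sum_coe_sort (Finset.HasAntidiagonal.antidiagonal m) g] at h7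
    have htS : HasSum t S := HasSum.sigma h5g hfiberg
    have ht0 : t 0 = 0 := by
      have e0 : t 0 = ∑ q ∈ Finset.HasAntidiagonal.antidiagonal 0, g q := rfl
      rw [e0, Finset.Nat.antidiagonal_zero, Finset.sum_singleton]
      simp [hg_def]
    have htsucc : ∀ n : ℕ, t (n+1) = a n * (((c+s)^(n+1) - (c-s)^(n+1))/((n:ℝ)+1)) := by
      intro n
      have e0 : t (n+1) = ∑ q ∈ Finset.HasAntidiagonal.antidiagonal (n+1), g q := rfl
      rw [e0, Finset.Nat.sum_antidiagonal_eq_sum_range_succ_mk]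
      have hterm : ∀ k ∈ Finset.range (n+2), g (k, n+1-k)
          = (a n / ((n:ℝ)+1)) * ((((n+1).choose k : ℕ) : ℝ) * c^k * (s^(n+1-k) - (-s)^(n+1-k))) := by
        intro k hk
        have hk' : k ≤ n+1 := by
          have := Finset.mem_range.1 hk
          omega
        have e1 : k + (n+1-k) = n+1 := by omega
        have e3 : (n+1).choose (n+1-k) = (n+1).choose k := Nat.choose_symm hk'
        simp only [hg_def, e1, e3, Nat.add_sub_cancel]
        push_cast
        ring
      rw [Finset.sum_congr rfl hterm, ← Finset.mul_sum]
      have hcs : (c+s)^(n+1) = ∑ k ∈ Finset.range (n+2), c^k * s^(n+1-k) * (((n+1).choose k : ℕ) : ℝ) :=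
        add_pow c s (n+1)
      have hcs2 : (c-s)^(n+1) = ∑ k ∈ Finset.range (n+2), c^k * (-s)^(n+1-k) * (((n+1).choose k : ℕ) : ℝ) := by
        have h12 := add_pow c (-s) (n+1)
        rw [← sub_eq_add_neg] at h12
        exact h12
      rw [hcs, hcs2, ← Finset.sum_sub_distrib]
      rw [show ∑ k ∈ Finset.range (n+2),
            (c^k * s^(n+1-k) * (((n+1).choose k : ℕ) : ℝ) - c^k * (-s)^(n+1-k) * (((n+1).choose k : ℕ) : ℝ))
          = ∑ k ∈ Finset.range (n+2), (((n+1).choose k : ℕ) : ℝ) * c^k * (s^(n+1-k) - (-s)^(n+1-k))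
        from Finset.sum_congr rfl (fun k _ => by ring)]
      ring
    have hshift : HasSum (fun n : ℕ => t (n+1)) S := by
      refine (hasSum_nat_add_iff (f := t) 1).2 ?_
      rwa [Finset.range_one, Finset.sum_singleton, ht0, add_zero]
    have hts : (fun n : ℕ => t (n+1))
        = fun n : ℕ => a n * (((c+s)^(n+1) - (c-s)^(n+1))/((n:ℝ)+1)) := funext htsucc
    rw [hts] at hshift
    have hι : Function.Injective (fun q : ℕ × ℕ => ((q.1, 2*q.2+1) : ℕ × ℕ)) := by
      intro x y h
      simp only [Prod.mk.injEq] at h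
      exact Prod.ext_iff.2 ⟨h.1, by omega⟩
    have hvan : ∀ x ∉ Set.range (fun q : ℕ × ℕ => ((q.1, 2*q.2+1) : ℕ × ℕ)), g x = 0 := by
      intro x hx
      rcases Nat.even_or_odd x.2 with he | ho
      · have e7 : (-s)^x.2 = s^x.2 := he.neg_pow s
        simp only [hg_def, e7, sub_self, mul_zero]
      · exfalso
        obtain ⟨β, hβ⟩ := ho
        refine hx ⟨(x.1, β), ?_⟩
        show (x.1, 2*β+1) = x
        rw [← hβ]
    have h10 : HasSum (g ∘ (fun q : ℕ × ℕ => ((q.1, 2*q.2+1) : ℕ × ℕ))) S :=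
      (hι.hasSum_iff hvan).2 hgS
    have h11 : (g ∘ (fun q : ℕ × ℕ => ((q.1, 2*q.2+1) : ℕ × ℕ)))
        = fun q : ℕ × ℕ => (lam q.1 q.2 * c ^ q.1 * v ^ q.2) * s := by
      funext q
      rcases q with ⟨α, β⟩
      simp only [Function.comp_apply, hg_def, hlam_def]
      have e1 : α + (2*β+1) = α + 2*β + 1 := by omega
      rw [e1]
      have e2 : α + 2*β + 1 - 1 = α + 2*β := by omega
      have e4 : (-s)^(2*β+1) = -(s^(2*β+1)) := Odd.neg_pow ⟨β, by ring⟩ s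
      have e5 : s^(2*β+1) = v^β * s := by
        rw [pow_succ, pow_mul, hs2]
      rw [e2, e4, e5]
      ring
    rw [h11] at h10
    have h12 : HasSum (fun q : ℕ × ℕ => (lam q.1 q.2 * c ^ q.1 * v ^ q.2) * s) (H c v * s) :=
      ((hsummable c v hc hv).hasSum).mul_right s
    rw [hint, hshift.tsum_eq]
    exact h10.unique h12
  refine ⟨H, hanalytic, hH00, ?_⟩
  have hδδ0 : (0:ℝ) < δ*δ := by positivity
  filter_upwards [prod_mem_nhds (Metric.ball_mem_nhds (0:ℝ) hδ0)
    (Metric.ball_mem_nhds (0:ℝ) hδδ0)] with q hq hq2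
  have hq1 : |q.1| < δ := by
    have := hq.1
    rwa [Metric.mem_ball, Real.dist_eq, sub_zero] at this
  have hq2' : |q.2| < δ*δ := by
    have := hq.2
    rwa [Metric.mem_ball, Real.dist_eq, sub_zero] at this
  exact hmain q.1 q.2 hq1 hq2' hq2


theorem mass_and_momentum_integrals_analytic_factorization
    (ρb w : ℝ → ℝ) (ρ₀ ω₀ t₀ : ℝ)
    (hρ : AnalyticOnNhd ℝ ρb Set.univ) (hw : AnalyticOnNhd ℝ w Set.univ)
    (hρ0 : ρb 0 = ρ₀) (hρpos : 0 < ρ₀) (hw0 : w 0 = ω₀)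
    (a₀ a₁ : ℝ → ℝ → ℝ)
    (ha₀ : AnalyticAt ℝ (fun p : ℝ × ℝ => a₀ p.1 p.2) (t₀, 0))
    (ha₁ : AnalyticAt ℝ (fun p : ℝ × ℝ => a₁ p.1 p.2) (t₀, 0))
    (h00 : a₀ t₀ 0 = 0) (h10 : a₁ t₀ 0 = 0)
    (x₁ x₂ : ℝ → ℝ → ℝ)
    (hx₁ : ∀ t x, x₁ t x = a₁ t x - Real.sqrt ((a₁ t x) ^ 2 - a₀ t x))
    (hx₂ : ∀ t x, x₂ t x = a₁ t x + Real.sqrt ((a₁ t x) ^ 2 - a₀ t x)) :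
    ∃ M G : ℝ → ℝ → ℝ,
      AnalyticAt ℝ (fun p : ℝ × ℝ => M p.1 p.2) (t₀, 0) ∧
      AnalyticAt ℝ (fun p : ℝ × ℝ => G p.1 p.2) (t₀, 0) ∧
      M t₀ 0 = 2 * ρb 0 ∧ G t₀ 0 = 2 * ρb 0 * w 0 ∧
      ∀ᶠ p : ℝ × ℝ in 𝓝 (t₀, 0), 0 ≤ (a₁ p.1 p.2) ^ 2 - a₀ p.1 p.2 →
        (∫ ξ in (x₁ p.1 p.2)..(x₂ p.1 p.2), ρb ξ) =
          M p.1 p.2 * Real.sqrt ((a₁ p.1 p.2) ^ 2 - a₀ p.1 p.2) ∧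
        (∫ ξ in (x₁ p.1 p.2)..(x₂ p.1 p.2), ρb ξ * w ξ) =
          G p.1 p.2 * Real.sqrt ((a₁ p.1 p.2) ^ 2 - a₀ p.1 p.2) := by
  obtain ⟨H₁, hH₁a, hH₁0, hid₁⟩ := aux_sqrt_integral ρb (hρ 0 trivial)
  obtain ⟨H₂, hH₂a, hH₂0, hid₂⟩ := aux_sqrt_integral (fun ξ => ρb ξ * w ξ)
    ((hρ 0 trivial).mul (hw 0 trivial))
  set Φ : ℝ × ℝ → ℝ × ℝ := fun p => (a₁ p.1 p.2, (a₁ p.1 p.2)^2 - a₀ p.1 p.2) with hΦ_def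
  have hΦa : AnalyticAt ℝ Φ (t₀, 0) := ha₁.prod ((ha₁.pow 2).sub ha₀)
  have hΦ0 : Φ (t₀, 0) = ((0:ℝ), (0:ℝ)) := by
    rw [hΦ_def]
    simp [h10, h00]
  refine ⟨fun t x => H₁ (a₁ t x) ((a₁ t x)^2 - a₀ t x),
          fun t x => H₂ (a₁ t x) ((a₁ t x)^2 - a₀ t x), ?_, ?_, ?_, ?_, ?_⟩
  · have hg : AnalyticAt ℝ (fun q : ℝ × ℝ => H₁ q.1 q.2) (Φ (t₀, 0)) := by
      rw [hΦ0]; exact hH₁a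
    exact hg.comp hΦa
  · have hg : AnalyticAt ℝ (fun q : ℝ × ℝ => H₂ q.1 q.2) (Φ (t₀, 0)) := by
      rw [hΦ0]; exact hH₂a
    exact hg.comp hΦa
  · show H₁ (a₁ t₀ 0) ((a₁ t₀ 0)^2 - a₀ t₀ 0) = 2 * ρb 0
    rw [h10, h00]
    simpa using hH₁0
  · show H₂ (a₁ t₀ 0) ((a₁ t₀ 0)^2 - a₀ t₀ 0) = 2 * ρb 0 * w 0
    rw [h10, h00]
    have e : ((0:ℝ)^2 - 0) = 0 := by norm_num
    rw [e, hH₂0]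
    ring
  · have htend : Filter.Tendsto Φ (𝓝 (t₀, 0)) (𝓝 ((0:ℝ),(0:ℝ))) := by
      have hcont := hΦa.continuousAt
      rwa [ContinuousAt, hΦ0] at hcont
    filter_upwards [htend.eventually hid₁, htend.eventually hid₂] with p h1 h2 hpos
    constructor
    · rw [hx₁ p.1 p.2, hx₂ p.1 p.2]
      exact h1 hpos
    · rw [hx₁ p.1 p.2, hx₂ p.1 p.2]
      exact h2 hpos
end

section
/- With ρ̄(0) = ρ₀ > 0, ω₁, ω₃ > 0, and X^±(t) = ±√(6ω₁²(t-t₀)/ω₃) + O(t-t₀), the mass captured by the singular point, m(t) = ∫_{X^-(t)}^{X^+(t)} ρ̄(ξ)dξ, satisfies m(t) = 2ω₁ρ₀√(6(t-t₀)/ω₃) + O(t-t₀) as t → t₀⁺. In particular m(t)/√(t-t₀) → 2ρ₀ω₁√(6/ω₃) > 0. -/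
open Topology Asymptotics intervalIntegral

theorem concentrated_mass_square_root_growth
    (ρb : ℝ → ℝ) (ρ₀ ω₁ ω₃ t₀ : ℝ)
    (hρ : AnalyticOnNhd ℝ ρb Set.univ)
    (hρ0 : ρb 0 = ρ₀) (hρpos : 0 < ρ₀)
    (hω₁ : 0 < ω₁) (hω₃ : 0 < ω₃) (ht₀ : t₀ = 1 / ω₁)
    (Xp Xm : ℝ → ℝ)
    (hXp : (fun t => Xp t - Real.sqrt (6*ω₁^2*(t - t₀)/ω₃))
      =O[𝓝[>] t₀] (fun t => t - t₀))
    (hXm : (fun t => Xm t + Real.sqrt (6*ω₁^2*(t - t₀)/ω₃))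
      =O[𝓝[>] t₀] (fun t => t - t₀))
    (m : ℝ → ℝ) (hm : ∀ t, m t = ∫ ξ in (Xm t)..(Xp t), ρb ξ) :
    (fun t => m t - 2*ω₁*ρ₀*Real.sqrt (6*(t - t₀)/ω₃))
      =O[𝓝[>] t₀] (fun t => t - t₀) ∧
    Filter.Tendsto (fun t => m t / Real.sqrt (t - t₀)) (𝓝[>] t₀)
      (𝓝 (2*ρ₀*ω₁*Real.sqrt (6/ω₃))) := by
  set l := 𝓝[>] t₀ with hl
  have hρc : Continuous ρb := continuousOn_univ.mp hρ.continuousOn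
  have hsub : Filter.Tendsto (fun t : ℝ => t - t₀) l (𝓝 0) := by
    have h : Filter.Tendsto (fun t : ℝ => t - t₀) (𝓝 t₀) (𝓝 (t₀ - t₀)) :=
      (continuous_sub_right t₀).tendsto t₀
    rw [sub_self] at h
    exact h.mono_left nhdsWithin_le_nhds
  have hr0 : Filter.Tendsto (fun t => Real.sqrt (t - t₀)) l (𝓝 0) := by
    have := (Real.continuous_sqrt.tendsto 0).comp hsub
    simpa [Function.comp_def] using this
  have hgt : ∀ᶠ t in l, t₀ < t := self_mem_nhdsWithin
  set K₀ : ℝ := ω₁ * Real.sqrt (6 / ω₃) with hK₀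
  have hK₀nn : 0 ≤ K₀ := mul_nonneg hω₁.le (Real.sqrt_nonneg _)
  have hs_eq : ∀ t : ℝ, Real.sqrt (6*ω₁^2*(t - t₀)/ω₃)
      = K₀ * Real.sqrt (t - t₀) := by
    intro t
    have h1 : 6*ω₁^2*(t - t₀)/ω₃ = ω₁^2 * (6/ω₃ * (t - t₀)) := by ring
    rw [h1, Real.sqrt_mul (sq_nonneg _), Real.sqrt_sq hω₁.le,
      Real.sqrt_mul (by positivity), hK₀, mul_assoc]
  have hs_eq2 : ∀ t : ℝ, Real.sqrt (6*(t - t₀)/ω₃)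
      = Real.sqrt (6/ω₃) * Real.sqrt (t - t₀) := by
    intro t
    have h1 : 6*(t - t₀)/ω₃ = 6/ω₃ * (t - t₀) := by ring
    rw [h1, Real.sqrt_mul (by positivity)]
  have hss : ∀ t : ℝ, Real.sqrt (6*ω₁^2*(t - t₀)/ω₃)
      = ω₁ * Real.sqrt (6*(t - t₀)/ω₃) := by
    intro t; rw [hs_eq t, hs_eq2 t, hK₀, mul_assoc]
  -- local Lipschitz-type bound near 0
  have hd : (fun ξ => ρb ξ - ρ₀) =O[𝓝 (0:ℝ)] fun ξ => ξ := by
    have h := ((hρ 0 trivial).differentiableAt.hasDerivAt).isBigO_sub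
    simpa [hρ0] using h
  obtain ⟨c, hc0, hc⟩ := hd.exists_pos
  rw [Asymptotics.isBigOWith_iff] at hc
  obtain ⟨δ, hδ0, hδ⟩ := Metric.eventually_nhds_iff.mp hc
  obtain ⟨C₁, hC₁⟩ := hXp.bound
  obtain ⟨C₂, hC₂⟩ := hXm.bound
  set K : ℝ := max C₁ 0 + max C₂ 0 + K₀ + 1 with hK
  have hm1 : (0:ℝ) ≤ max C₁ 0 := le_max_right _ _
  have hm2 : (0:ℝ) ≤ max C₂ 0 := le_max_right _ _
  have hKpos : 0 < K := by rw [hK]; linarith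
  have hsmall : ∀ᶠ t in l, Real.sqrt (t - t₀) < min 1 (δ / K) :=
    hr0.eventually (gt_mem_nhds (lt_min one_pos (by positivity)))
  -- the main bound package
  have hmain : ∀ᶠ t in l,
      ‖∫ ξ in (Xm t)..(Xp t), (ρb ξ - ρ₀)‖ ≤ (2*c*K^2) * ‖t - t₀‖ := by
    filter_upwards [hgt, hC₁, hC₂, hsmall] with t ht h1 h2 h3
    set r := Real.sqrt (t - t₀) with hr
    have htpos : 0 < t - t₀ := sub_pos.mpr ht
    have hrpos : 0 < r := Real.sqrt_pos.mpr htpos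
    have hr2 : r * r = t - t₀ := Real.mul_self_sqrt htpos.le
    have hr1 : r ≤ 1 := ((lt_min_iff.mp h3).1).le
    have hrδ : K * r < δ := by
      have := (lt_min_iff.mp h3).2
      calc K * r < K * (δ / K) := by exact (mul_lt_mul_iff_right₀ hKpos).mpr this
        _ = δ := by field_simp
    have htr : t - t₀ ≤ r := by
      calc t - t₀ = r * r := hr2.symm
        _ ≤ 1 * r := mul_le_mul_of_nonneg_right hr1 hrpos.le
        _ = r := one_mul r
    have hnorm : ‖t - t₀‖ = t - t₀ := by
      rw [Real.norm_eq_abs, abs_of_pos htpos]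
    have hsb : |Real.sqrt (6*ω₁^2*(t - t₀)/ω₃)| ≤ K₀ * r := by
      rw [hs_eq t, abs_of_nonneg (by positivity)]
    have hmaxr : ∀ C : ℝ, C * (t - t₀) ≤ max C 0 * r := by
      intro C
      calc C * (t - t₀) ≤ max C 0 * (t - t₀) :=
            mul_le_mul_of_nonneg_right (le_max_left C 0) htpos.le
        _ ≤ max C 0 * r := mul_le_mul_of_nonneg_left htr (le_max_right C 0)
    have hKr : ∀ a : ℝ, a ≤ K - 1 → a * r ≤ K * r := by
      intro a ha
      have : a ≤ K := by linarith
      exact mul_le_mul_of_nonneg_right this hrpos.le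
    have hXpb : |Xp t| ≤ K * r := by
      have hb : |Xp t - Real.sqrt (6*ω₁^2*(t - t₀)/ω₃)| ≤ max C₁ 0 * r := by
        rw [Real.norm_eq_abs, hnorm] at h1
        exact h1.trans (hmaxr C₁)
      have htri : |Xp t| ≤ |Xp t - Real.sqrt (6*ω₁^2*(t - t₀)/ω₃)|
          + |Real.sqrt (6*ω₁^2*(t - t₀)/ω₃)| := by
        have := abs_add_le (Xp t - Real.sqrt (6*ω₁^2*(t - t₀)/ω₃))
          (Real.sqrt (6*ω₁^2*(t - t₀)/ω₃))
        simpa using this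
      have h5 : (max C₁ 0 + K₀) * r ≤ K * r := hKr _ (by rw [hK]; linarith)
      calc |Xp t| ≤ max C₁ 0 * r + K₀ * r := by linarith
        _ = (max C₁ 0 + K₀) * r := by ring
        _ ≤ K * r := h5
    have hXmb : |Xm t| ≤ K * r := by
      have hb : |Xm t + Real.sqrt (6*ω₁^2*(t - t₀)/ω₃)| ≤ max C₂ 0 * r := by
        rw [Real.norm_eq_abs, hnorm] at h2
        exact h2.trans (hmaxr C₂)
      have htri : |Xm t| ≤ |Xm t + Real.sqrt (6*ω₁^2*(t - t₀)/ω₃)|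
          + |Real.sqrt (6*ω₁^2*(t - t₀)/ω₃)| := by
        have := abs_add_le (Xm t + Real.sqrt (6*ω₁^2*(t - t₀)/ω₃))
          (-(Real.sqrt (6*ω₁^2*(t - t₀)/ω₃)))
        simpa using this
      have h5 : (max C₂ 0 + K₀) * r ≤ K * r := hKr _ (by rw [hK]; linarith)
      calc |Xm t| ≤ max C₂ 0 * r + K₀ * r := by linarith
        _ = (max C₂ 0 + K₀) * r := by ring
        _ ≤ K * r := h5
    have hξ : ∀ ξ ∈ Set.uIoc (Xm t) (Xp t), ‖ρb ξ - ρ₀‖ ≤ c * (K * r) := by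
      intro ξ hξm
      obtain ⟨hξ1, hξ2⟩ := hξm
      have hξabs : |ξ| ≤ K * r := by
        rw [abs_le]
        constructor
        · have h5 : -(K*r) ≤ min (Xm t) (Xp t) := le_min
            (neg_le_of_abs_le hXmb) (neg_le_of_abs_le hXpb)
          exact h5.trans hξ1.le
        · have h5 : max (Xm t) (Xp t) ≤ K*r := max_le
            (le_of_abs_le hXmb) (le_of_abs_le hXpb)
          exact hξ2.trans h5
      have hdist : dist ξ 0 < δ := by
        rw [Real.dist_eq, sub_zero]
        exact lt_of_le_of_lt hξabs hrδ
      have := hδ hdist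
      calc ‖ρb ξ - ρ₀‖ ≤ c * ‖ξ‖ := this
        _ ≤ c * (K * r) := by
            rw [Real.norm_eq_abs]
            exact mul_le_mul_of_nonneg_left hξabs hc0.le
    have hint := intervalIntegral.norm_integral_le_of_norm_le_const hξ
    have hlen : |Xp t - Xm t| ≤ 2 * (K * r) := by
      have := abs_sub (Xp t) (Xm t)
      linarith
    calc ‖∫ ξ in (Xm t)..(Xp t), (ρb ξ - ρ₀)‖
        ≤ c * (K * r) * |Xp t - Xm t| := hint
      _ ≤ c * (K * r) * (2 * (K * r)) := by
          apply mul_le_mul_of_nonneg_left hlen (by positivity)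
      _ = (2*c*K^2) * (r * r) := by ring
      _ = (2*c*K^2) * ‖t - t₀‖ := by rw [hr2, hnorm]
  have hbig : (fun t => ∫ ξ in (Xm t)..(Xp t), (ρb ξ - ρ₀)) =O[l]
      (fun t => t - t₀) := Asymptotics.isBigO_iff.mpr ⟨2*c*K^2, hmain⟩
  -- decomposition
  have heq : ∀ᶠ t in l, m t - 2*ω₁*ρ₀*Real.sqrt (6*(t - t₀)/ω₃)
      = (∫ ξ in (Xm t)..(Xp t), (ρb ξ - ρ₀))
        + ρ₀ * ((Xp t - Real.sqrt (6*ω₁^2*(t - t₀)/ω₃))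
          - (Xm t + Real.sqrt (6*ω₁^2*(t - t₀)/ω₃))) := by
    filter_upwards [hgt] with t ht
    have hint : (∫ ξ in (Xm t)..(Xp t), (ρb ξ - ρ₀))
        = (∫ ξ in (Xm t)..(Xp t), ρb ξ) - (Xp t - Xm t) * ρ₀ := by
      rw [intervalIntegral.integral_sub (hρc.intervalIntegrable _ _)
        (intervalIntegrable_const), intervalIntegral.integral_const,
        smul_eq_mul]
    rw [hm t, hint, hss t]
    ring
  have h1 : (fun t => m t - 2*ω₁*ρ₀*Real.sqrt (6*(t - t₀)/ω₃)) =O[l]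
      (fun t => t - t₀) := by
    refine Filter.EventuallyEq.trans_isBigO heq ?_
    exact hbig.add ((hXp.sub hXm).const_mul_left ρ₀)
  refine ⟨h1, ?_⟩
  -- part 2
  have h2 : Filter.Tendsto
      (fun t => (m t - 2*ω₁*ρ₀*Real.sqrt (6*(t - t₀)/ω₃))
        / Real.sqrt (t - t₀)) l (𝓝 0) := by
    have hmul := h1.mul (isBigO_refl (fun t => (Real.sqrt (t - t₀))⁻¹) l)
    have h3 : (fun t => (t - t₀) * (Real.sqrt (t - t₀))⁻¹)
        =ᶠ[l] (fun t => Real.sqrt (t - t₀)) := by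
      filter_upwards [hgt] with t ht
      have htpos : 0 < t - t₀ := sub_pos.mpr ht
      have hrpos : 0 < Real.sqrt (t - t₀) := Real.sqrt_pos.mpr htpos
      rw [← Real.mul_self_sqrt htpos.le]
      field_simp
      rw [Real.sqrt_sq hrpos.le]
    have h4 := (hmul.trans_eventuallyEq h3).trans_tendsto hr0
    simpa [div_eq_mul_inv] using h4
  have heq2 : ∀ᶠ t in l, (m t - 2*ω₁*ρ₀*Real.sqrt (6*(t - t₀)/ω₃))
      / Real.sqrt (t - t₀) + 2*ρ₀*ω₁*Real.sqrt (6/ω₃)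
      = m t / Real.sqrt (t - t₀) := by
    filter_upwards [hgt] with t ht
    have htpos : 0 < t - t₀ := sub_pos.mpr ht
    have hrne : Real.sqrt (t - t₀) ≠ 0 := (Real.sqrt_pos.mpr htpos).ne'
    rw [hs_eq2 t]
    field_simp
    ring
  have := (h2.add (tendsto_const_nhds
    (x := 2*ρ₀*ω₁*Real.sqrt (6/ω₃)) (f := l))).congr' heq2
  simpa using this
end
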